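/- Let G be a second-countable profinite group, μ the normalized Haar probability measure on G, and T : G → G a measure-preserving quotient-preserving map. Then there exists a metric d on G such that: (i) d induces the topology of G; (ii) d is left translation invariant, i.e. d(gx, gy) = d(x, y) for all x, y, g ∈ G; (iii) T is an isometry with respect to d; and (iv) the collection of open normal subgroups of G that are closed balls centered at the identity with respect to d (i.e. of the form {x ∈ G : d(1, x) ≤ r} for some r > 0) forms a base of neighborhoods of the identity of G. -/

import Mathlib

open MeasureTheory

/-- `T` factors through the quotient map `G → G/N`. -/
def MapFactorsThrough {G : Type*} [Group G] (T : G → G) (N : Subgroup G) : Prop :=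
  ∀ x y : G, x⁻¹ * y ∈ N → (T x)⁻¹ * T y ∈ N

/-- `T` is a quotient-preserving map: the open normal subgroups through whose quotient
maps `T` factors contain a base of neighborhoods of the identity. -/
def QuotientPreserving {G : Type*} [Group G] [TopologicalSpace G] (T : G → G) : Prop :=
  ∀ U ∈ nhds (1 : G), ∃ N : Subgroup G,
    N.Normal ∧ IsOpen (N : Set G) ∧ (N : Set G) ⊆ U ∧ MapFactorsThrough T N

/-- Key lemma: if `T` is measure preserving and factors through `π_N` for an open subgroup
`N`, then the induced map on cosets is injective, i.e. the factoring condition is an iff. -/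
lemma key_iff {G : Type*} [Group G] [TopologicalSpace G] [IsTopologicalGroup G]
    [CompactSpace G] [MeasurableSpace G] [BorelSpace G]
    (μ : Measure G) [μ.IsHaarMeasure] [IsProbabilityMeasure μ]
    (T : G → G) (hMP : ∀ S : Set G, MeasurableSet S → μ (T ⁻¹' S) = μ S)
    (N : Subgroup G) (hNopen : IsOpen (N : Set G)) (hFac : MapFactorsThrough T N)
    (x y : G) : x⁻¹ * y ∈ N ↔ (T x)⁻¹ * T y ∈ N := by
  constructor
  · exact hFac x y
  · intro hTxy
    by_contra hxy
    set A : Set G := (fun z => x⁻¹ * z) ⁻¹' (N : Set G) with hA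
    set B : Set G := (fun z => y⁻¹ * z) ⁻¹' (N : Set G) with hB
    set C : Set G := (fun z => (T x)⁻¹ * z) ⁻¹' (N : Set G) with hC
    have hNm : MeasurableSet (N : Set G) := hNopen.measurableSet
    have hAm : MeasurableSet A := hNm.preimage (measurable_const_mul _)
    have hBm : MeasurableSet B := hNm.preimage (measurable_const_mul _)
    have hCm : MeasurableSet C := hNm.preimage (measurable_const_mul _)
    have hμA : μ A = μ (N : Set G) := measure_preimage_mul μ x⁻¹ N
    have hμB : μ B = μ (N : Set G) := measure_preimage_mul μ y⁻¹ N
    have hμC : μ C = μ (N : Set G) := measure_preimage_mul μ (T x)⁻¹ N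
    have hAC : A ⊆ T ⁻¹' C := by
      intro z hz
      exact hFac x z hz
    have hBC : B ⊆ T ⁻¹' C := by
      intro z hz
      have h1 : (T y)⁻¹ * T z ∈ N := hFac y z hz
      have : (T x)⁻¹ * T z = ((T x)⁻¹ * T y) * ((T y)⁻¹ * T z) := by group
      show (T x)⁻¹ * T z ∈ N
      rw [this]
      exact N.mul_mem hTxy h1
    have hdisj : Disjoint A B := by
      rw [Set.disjoint_left]
      intro z hzA hzB
      apply hxy
      have : x⁻¹ * y = (x⁻¹ * z) * (y⁻¹ * z)⁻¹ := by group
      rw [this]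
      exact N.mul_mem hzA (N.inv_mem hzB)
    have hUnion : μ A + μ B ≤ μ (T ⁻¹' C) := by
      rw [← measure_union hdisj hBm]
      exact measure_mono (Set.union_subset hAC hBC)
    have hTC : μ (T ⁻¹' C) = μ (N : Set G) := by rw [hMP C hCm, hμC]
    have hpos : 0 < μ (N : Set G) := hNopen.measure_pos μ ⟨1, N.one_mem⟩
    have h2 : μ (N : Set G) + μ (N : Set G) ≤ μ (N : Set G) := by
      calc μ (N : Set G) + μ (N : Set G) = μ A + μ B := by rw [hμA, hμB]
        _ ≤ μ (T ⁻¹' C) := hUnion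
        _ = μ (N : Set G) := hTC
    have hlt : μ (N : Set G) < μ (N : Set G) + μ (N : Set G) :=
      ENNReal.lt_add_right (measure_ne_top μ _) hpos.ne'
    exact lt_irrefl _ (hlt.trans_le h2)

theorem stmt4 {G : Type*} [Group G] [TopologicalSpace G] [IsTopologicalGroup G]
    [CompactSpace G] [T2Space G] [TotallyDisconnectedSpace G] [SecondCountableTopology G]
    [MeasurableSpace G] [BorelSpace G]
    (μ : Measure G) [μ.IsHaarMeasure] [IsProbabilityMeasure μ]
    (T : G → G) (hT : QuotientPreserving T)
    (hMP : ∀ S : Set G, MeasurableSet S → μ (T ⁻¹' S) = μ S) :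
    ∃ d : G → G → ℝ,
      -- d is a metric
      (∀ x y, 0 ≤ d x y) ∧
      (∀ x y, d x y = 0 ↔ x = y) ∧
      (∀ x y, d x y = d y x) ∧
      (∀ x y z, d x z ≤ d x y + d y z) ∧
      -- (i) d induces the topology of G
      (∀ s : Set G, IsOpen s ↔ ∀ x ∈ s, ∃ ε > 0, ∀ y, d x y < ε → y ∈ s) ∧
      -- (ii) d is left translation invariant
      (∀ g x y : G, d (g * x) (g * y) = d x y) ∧
      -- (iii) T is an isometry with respect to d
      (∀ x y, d (T x) (T y) = d x y) ∧
      -- (iv) the open normal subgroups that are closed balls about the identity form a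
      -- base of neighborhoods of the identity
      (∀ U ∈ nhds (1 : G), ∃ N : Subgroup G, N.Normal ∧ IsOpen (N : Set G) ∧
        (∃ r : ℝ, 0 < r ∧ (N : Set G) = {x : G | d 1 x ≤ r}) ∧ (N : Set G) ⊆ U) := by
  classical
  -- countable antitone neighborhood basis at 1
  obtain ⟨u, hu⟩ := (nhds (1 : G)).exists_antitone_basis
  have humem : ∀ n, u n ∈ nhds (1 : G) := fun n => hu.1.mem_of_mem trivial
  -- step: refine any open subgroup inside u n
  have step : ∀ (n : ℕ) (M : Subgroup G), IsOpen (M : Set G) →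
      ∃ N : Subgroup G, N.Normal ∧ IsOpen (N : Set G) ∧
        (N : Set G) ⊆ ↑M ∩ u n ∧ MapFactorsThrough T N := by
    intro n M hM
    have h1 : ((M : Set G) ∩ u n) ∈ nhds (1 : G) :=
      Filter.inter_mem (hM.mem_nhds M.one_mem) (humem n)
    obtain ⟨N, hN⟩ := hT _ h1
    exact ⟨N, hN.1, hN.2.1, hN.2.2.1, hN.2.2.2⟩
  choose F hF using step
  have htop : IsOpen ((⊤ : Subgroup G) : Set G) := by simp
  let seq : ℕ → {M : Subgroup G // IsOpen (M : Set G)} := fun n =>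
    Nat.rec ⟨F 0 ⊤ htop, (hF 0 ⊤ htop).2.1⟩
      (fun n p => ⟨F (n + 1) p.1 p.2, (hF (n + 1) p.1 p.2).2.1⟩) n
  let Nn : ℕ → Subgroup G := fun n => (seq n).1
  have hNopen : ∀ n, IsOpen (Nn n : Set G) := fun n => (seq n).2
  have hseq0 : seq 0 = ⟨F 0 ⊤ htop, (hF 0 ⊤ htop).2.1⟩ := rfl
  have hseqS : ∀ n, seq (n + 1) =
      ⟨F (n + 1) (seq n).1 (seq n).2, (hF (n + 1) (seq n).1 (seq n).2).2.1⟩ := fun n => rfl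
  have hNnormal : ∀ n, (Nn n).Normal := by
    intro n
    cases n with
    | zero => exact (hF 0 ⊤ htop).1
    | succ m => exact (hF (m + 1) (seq m).1 (seq m).2).1
  have hNfac : ∀ n, MapFactorsThrough T (Nn n) := by
    intro n
    cases n with
    | zero => exact (hF 0 ⊤ htop).2.2.2
    | succ m => exact (hF (m + 1) (seq m).1 (seq m).2).2.2.2
  have hNsub : ∀ n, (Nn n : Set G) ⊆ u n := by
    intro n
    cases n with
    | zero => exact fun x hx => ((hF 0 ⊤ htop).2.2.1 hx).2
    | succ m => exact fun x hx => ((hF (m + 1) (seq m).1 (seq m).2).2.2.1 hx).2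
  have hNnest : ∀ n, (Nn (n + 1) : Set G) ⊆ (Nn n : Set G) := by
    intro n
    exact fun x hx => ((hF (n + 1) (seq n).1 (seq n).2).2.2.1 hx).1
  have hanti : ∀ m n, m ≤ n → (Nn n : Set G) ⊆ (Nn m : Set G) := by
    intro m n hmn
    induction n, hmn using Nat.le_induction with
    | base => exact subset_rfl
    | succ k hk ih => exact (hNnest k).trans ih
  -- existence of escaping index for g ≠ 1
  have hescape : ∀ g : G, g ≠ 1 → ∃ n, g ∉ Nn n := by
    intro g hg
    have h1 : ({g}ᶜ : Set G) ∈ nhds (1 : G) :=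
      (isOpen_compl_singleton).mem_nhds (by simp [Ne.symm hg])
    obtain ⟨n, -, hn⟩ := hu.1.mem_iff.mp h1
    exact ⟨n, fun hgn => hn (hNsub n hgn) rfl⟩
  -- the "norm" function
  let c : G → ℝ := fun g => if h : ∃ n, g ∉ Nn n then (1 / 2 : ℝ) ^ (Nat.find h) else 0
  have hc_nonneg : ∀ g, 0 ≤ c g := by
    intro g
    simp only [c]
    split
    · positivity
    · exact le_refl 0
  have hc_one : c 1 = 0 := by
    simp only [c]
    rw [dif_neg]
    push_neg
    exact fun n => (Nn n).one_mem
  have hc_pos : ∀ g, g ≠ 1 → 0 < c g := by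
    intro g hg
    simp only [c]
    rw [dif_pos (hescape g hg)]
    positivity
  -- master lemma: membership vs metric
  have mem_iff : ∀ (g : G) (n : ℕ), g ∈ Nn n ↔ c g < (1 / 2 : ℝ) ^ n := by
    intro g n
    simp only [c]
    split
    · rename_i h
      rw [pow_lt_pow_iff_right_of_lt_one₀ (by norm_num) (by norm_num)]
      rw [Nat.lt_find_iff]
      constructor
      · intro hg m hm
        simp only [not_not]
        exact hanti m n hm hg
      · intro hall
        simpa using hall n le_rfl
    · rename_i h
      push_neg at h
      simp [h n, pow_pos (by norm_num : (0:ℝ) < 1/2) n]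
  have hc_congr : ∀ g h' : G, (∀ n, g ∈ Nn n ↔ h' ∈ Nn n) → c g = c h' := by
    intro g h' hiff
    by_cases h1 : ∃ n, g ∉ Nn n
    · have h2 : ∃ n, h' ∉ Nn n := by
        obtain ⟨n, hn⟩ := h1
        exact ⟨n, fun hh => hn ((hiff n).mpr hh)⟩
      simp only [c]
      rw [dif_pos h1, dif_pos h2]
      congr 1
      apply le_antisymm
      · exact Nat.find_le (fun hh => Nat.find_spec h2 ((hiff _).mp hh))
      · exact Nat.find_le (fun hh => Nat.find_spec h1 ((hiff _).mpr hh))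
    · have h2 : ¬ ∃ n, h' ∉ Nn n := by
        intro ⟨n, hn⟩
        exact h1 ⟨n, fun hh => hn ((hiff n).mp hh)⟩
      simp only [c]
      rw [dif_neg h1, dif_neg h2]
  -- ultrametric inequality
  have hc_mul : ∀ g h' : G, c (g * h') ≤ max (c g) (c h') := by
    intro g h'
    by_cases h : ∃ n, g * h' ∉ Nn n
    · have hk : g * h' ∉ Nn (Nat.find h) := Nat.find_spec h
      have hck : c (g * h') = (1 / 2 : ℝ) ^ (Nat.find h) := by
        simp only [c]; rw [dif_pos h]
      rw [hck]
      by_contra hcon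
      push_neg at hcon
      obtain ⟨h1, h2⟩ := max_lt_iff.mp hcon
      exact hk ((Nn (Nat.find h)).mul_mem ((mem_iff g _).mpr h1) ((mem_iff h' _).mpr h2))
    · have : c (g * h') = 0 := by simp only [c]; rw [dif_neg h]
      rw [this]
      exact le_max_of_le_left (hc_nonneg g)
  have hc_inv : ∀ g : G, c g⁻¹ = c g := by
    intro g
    exact hc_congr g⁻¹ g (fun n => by rw [inv_mem_iff])
  -- define the metric
  refine ⟨fun x y => c (x⁻¹ * y), ?_, ?_, ?_, ?_, ?_, ?_, ?_, ?_⟩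
  · intro x y; exact hc_nonneg _
  · intro x y
    constructor
    · intro h
      by_contra hne
      have : x⁻¹ * y ≠ 1 := fun heq => hne (by
        have := heq; rwa [inv_mul_eq_one] at this)
      exact absurd h (hc_pos _ this).ne'
    · intro h; subst h; simpa using hc_one
  · intro x y
    show c (x⁻¹ * y) = c (y⁻¹ * x)
    have h : y⁻¹ * x = (x⁻¹ * y)⁻¹ := by group
    rw [h, hc_inv]
  · intro x y z
    show c (x⁻¹ * z) ≤ c (x⁻¹ * y) + c (y⁻¹ * z)
    have heq : x⁻¹ * z = (x⁻¹ * y) * (y⁻¹ * z) := by group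
    rw [heq]
    refine (hc_mul _ _).trans ?_
    rcases max_cases (c (x⁻¹ * y)) (c (y⁻¹ * z)) with ⟨h1, -⟩ | ⟨h1, -⟩ <;> rw [h1]
    · exact le_add_of_nonneg_right (hc_nonneg _)
    · exact le_add_of_nonneg_left (hc_nonneg _)
  · -- topology
    intro s
    constructor
    · intro hs x hx
      have h1 : {g : G | x * g ∈ s} ∈ nhds (1 : G) := by
        have hcont : ContinuousAt (fun g : G => x * g) 1 :=
          (continuous_const.mul continuous_id).continuousAt
        exact hcont (hs.mem_nhds (show (fun g : G => x * g) 1 ∈ s by simpa using hx))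
      obtain ⟨n, -, hn⟩ := hu.1.mem_iff.mp h1
      refine ⟨(1 / 2 : ℝ) ^ n, by positivity, ?_⟩
      intro y hy
      have hmem : x⁻¹ * y ∈ Nn n := (mem_iff _ n).mpr hy
      have : x * (x⁻¹ * y) ∈ s := hn (hNsub n hmem)
      simpa using this
    · intro hs
      rw [isOpen_iff_mem_nhds]
      intro x hx
      obtain ⟨ε, hε, hball⟩ := hs x hx
      obtain ⟨n, hn⟩ := exists_pow_lt_of_lt_one hε (by norm_num : (1 / 2 : ℝ) < 1)
      have hsub : (fun y => x⁻¹ * y) ⁻¹' (Nn n : Set G) ⊆ s := by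
        intro y hy
        exact hball y (lt_trans ((mem_iff _ n).mp hy) hn)
      have hopen : IsOpen ((fun y => x⁻¹ * y) ⁻¹' (Nn n : Set G)) :=
        (hNopen n).preimage (continuous_const.mul continuous_id)
      exact Filter.mem_of_superset (hopen.mem_nhds (by simp [(Nn n).one_mem])) hsub
  · intro g x y
    show c ((g * x)⁻¹ * (g * y)) = c (x⁻¹ * y)
    have h : (g * x)⁻¹ * (g * y) = x⁻¹ * y := by group
    rw [h]
  · -- T isometry
    intro x y
    exact hc_congr _ _ (fun n =>
      (key_iff μ T hMP (Nn n) (hNopen n) (hNfac n) x y).symm)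
  · -- (iv)
    intro U hU
    obtain ⟨n, -, hn⟩ := hu.1.mem_iff.mp hU
    refine ⟨Nn n, hNnormal n, hNopen n, ?_, (hNsub n).trans hn⟩
    refine ⟨(1 / 2 : ℝ) ^ (n + 1), by positivity, ?_⟩
    ext g
    simp only [Set.mem_setOf_eq, SetLike.mem_coe]
    rw [show c ((1 : G)⁻¹ * g) = c g by rw [show (1:G)⁻¹ * g = g by group]]
    constructor
    · intro hg
      -- c g < (1/2)^n implies c g ≤ (1/2)^(n+1) since values are powers of 1/2
      have hlt : c g < (1 / 2 : ℝ) ^ n := (mem_iff g n).mp hg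
      simp only [c] at hlt ⊢
      split at hlt
      · rename_i h
        rw [dif_pos h] at *
        rw [pow_lt_pow_iff_right_of_lt_one₀ (by norm_num) (by norm_num)] at hlt
        exact pow_le_pow_of_le_one (by norm_num) (by norm_num) hlt
      · rename_i h
        rw [dif_neg h]
        positivity
    · intro hg
      refine (mem_iff g n).mpr (lt_of_le_of_lt hg ?_)
      exact pow_lt_pow_right_of_lt_one₀ (by norm_num) (by norm_num) (by omega)
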